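/- Lower bound on the ε-measure: under the hypotheses that E is a convex LOCC monotone, D is a convex contractive distance satisfying the triangle inequality, and ε ≤ E_D(ρ), one has E_ε^{(D)}(ρ) ≥ min{E(τ) : E_D(τ) = E_D(ρ) − ε}. -/

import Mathlib

/-- Lower bound on the ε-measure: if `E` is a convex LOCC monotone (in particular
non-increasing under mixing with separable states), `D` is a convex contractive distance
with the triangle inequality, and `ε ≤ E_D(ρ)`, then
`E_ε(ρ) ≥ min{E(τ) : E_D(τ) = E_D(ρ) − ε}`. -/
theorem stmt14 {V : Type*} [AddCommGroup V] [Module ℝ V]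
    (K Sep : Set V) (hSK : Sep ⊆ K) (hKconv : Convex ℝ K) (hSconv : Convex ℝ Sep)
    (hSne : Sep.Nonempty)
    (D : V → V → ℝ) (hDnn : ∀ ρ σ, 0 ≤ D ρ σ) (hD0 : ∀ ρ σ, D ρ σ = 0 ↔ ρ = σ)
    (hDsymm : ∀ ρ σ, D ρ σ = D σ ρ)
    (hDtri : ∀ ρ σ τ, D ρ τ ≤ D ρ σ + D σ τ)
    (hDconv₁ : ∀ ρ₁ ρ₂ σ : V, ∀ p : ℝ, 0 ≤ p → p ≤ 1 →
      D (p • ρ₁ + (1 - p) • ρ₂) σ ≤ p * D ρ₁ σ + (1 - p) * D ρ₂ σ)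
    (hDconv₂ : ∀ ρ σ₁ σ₂ : V, ∀ p : ℝ, 0 ≤ p → p ≤ 1 →
      D ρ (p • σ₁ + (1 - p) • σ₂) ≤ p * D ρ σ₁ + (1 - p) * D ρ σ₂)
    (E : V → ℝ) (hEnn : ∀ σ ∈ K, 0 ≤ E σ)
    (hEconv : ∀ σ₁ ∈ K, ∀ σ₂ ∈ K, ∀ p : ℝ, 0 ≤ p → p ≤ 1 →
      E (p • σ₁ + (1 - p) • σ₂) ≤ p * E σ₁ + (1 - p) * E σ₂)
    (hEmix : ∀ τ ∈ K, ∀ σ ∈ Sep, ∀ s : ℝ, 0 ≤ s → s ≤ 1 →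
      E ((1 - s) • τ + s • σ) ≤ E τ)
    (hSepOpt : ∀ τ ∈ K, ∃ σ ∈ Sep, IsLeast ((D τ) '' Sep) (D τ σ))
    (ρ : V) (hρ : ρ ∈ K) (ε : ℝ) (hε0 : 0 ≤ ε) (hε : ε ≤ sInf ((D ρ) '' Sep))
    (ρt : V) (hρt : ρt ∈ K)
    (hopt : IsLeast (E '' {τ ∈ K | D ρ τ ≤ ε}) (E ρt)) (hball : D ρ ρt ≤ ε) :
    sInf (E '' {τ ∈ K | sInf ((D τ) '' Sep) = sInf ((D ρ) '' Sep) - ε}) ≤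
      sInf (E '' {τ ∈ K | D ρ τ ≤ ε}) := by
  obtain ⟨σt, hσt, hla⟩ := hSepOpt ρt hρt
  set a : ℝ := D ρt σt with ha_def
  set b : ℝ := sInf ((D ρ) '' Sep) - ε with hb_def
  have hbdd : ∀ τ : V, BddBelow ((D τ) '' Sep) := by
    intro τ
    exact ⟨0, by rintro x ⟨σ, hσ, rfl⟩; exact hDnn τ σ⟩
  have hb0 : 0 ≤ b := by simpa [hb_def] using hε
  -- E_D(ρ) ≤ ε + a
  have hEDρ : sInf ((D ρ) '' Sep) ≤ ε + a := by
    have h1 : sInf ((D ρ) '' Sep) ≤ D ρ σt :=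
      csInf_le (hbdd ρ) ⟨σt, hσt, rfl⟩
    have h2 : D ρ σt ≤ D ρ ρt + D ρt σt := hDtri ρ ρt σt
    linarith
  have hba : b ≤ a := by simp only [hb_def]; linarith
  have ha0 : 0 ≤ a := hDnn ρt σt
  -- choose s with (1-s)*a = b
  obtain ⟨s, hs0, hs1, hsa⟩ : ∃ s : ℝ, 0 ≤ s ∧ s ≤ 1 ∧ (1 - s) * a = b := by
    rcases eq_or_lt_of_le ha0 with h | h
    · exact ⟨0, le_refl 0, zero_le_one, by nlinarith⟩
    · refine ⟨1 - b / a, by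
        have : b / a ≤ 1 := (div_le_one h).mpr hba
        linarith, by
        have : 0 ≤ b / a := div_nonneg hb0 (le_of_lt h)
        linarith, by field_simp; ring⟩
  set τ : V := (1 - s) • ρt + s • σt with hτ_def
  have hτK : τ ∈ K := hKconv hρt (hSK hσt) (by linarith) hs0 (by ring)
  -- D ρt τ ≤ s * a
  have hDρtτ : D ρt τ ≤ s * a := by
    have h := hDconv₂ ρt ρt σt (1 - s) (by linarith) (by linarith)
    rw [sub_sub_cancel] at h
    have h0 : D ρt ρt = 0 := (hD0 ρt ρt).mpr rfl
    rw [h0] at h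
    linarith
  -- lower bound: ∀ σ ∈ Sep, b ≤ D τ σ
  have hlow : ∀ x ∈ (D τ) '' Sep, b ≤ x := by
    rintro x ⟨σ, hσ, rfl⟩
    have h1 : D ρt σ ≤ D ρt τ + D τ σ := hDtri ρt τ σ
    have h2 : a ≤ D ρt σ := hla.2 ⟨σ, hσ, rfl⟩
    nlinarith
  -- upper bound: D τ σt ≤ b
  have hup : D τ σt ≤ b := by
    have h := hDconv₁ ρt σt σt (1 - s) (by linarith) (by linarith)
    rw [sub_sub_cancel] at h
    have h0 : D σt σt = 0 := (hD0 σt σt).mpr rfl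
    rw [h0] at h
    rw [← ha_def, hsa] at h
    simpa [hτ_def] using h
  have hEDτ : sInf ((D τ) '' Sep) = sInf ((D ρ) '' Sep) - ε := by
    rw [← hb_def]
    refine le_antisymm ?_ (le_csInf ⟨D τ σt, σt, hσt, rfl⟩ hlow)
    exact le_trans (csInf_le (hbdd τ) ⟨σt, hσt, rfl⟩) hup
  have hmem : E τ ∈ E '' {τ ∈ K | sInf ((D τ) '' Sep) = sInf ((D ρ) '' Sep) - ε} :=
    ⟨τ, ⟨hτK, hEDτ⟩, rfl⟩
  have hbddE : BddBelow (E '' {τ ∈ K | sInf ((D τ) '' Sep) = sInf ((D ρ) '' Sep) - ε}) :=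
    ⟨0, by rintro x ⟨τ', ⟨hτ', _⟩, rfl⟩; exact hEnn τ' hτ'⟩
  have h1 : sInf (E '' {τ ∈ K | sInf ((D τ) '' Sep) = sInf ((D ρ) '' Sep) - ε}) ≤ E τ :=
    csInf_le hbddE hmem
  have h2 : E τ ≤ E ρt := hEmix ρt hρt σt hσt s hs0 hs1
  have h3 : sInf (E '' {τ ∈ K | D ρ τ ≤ ε}) = E ρt := hopt.csInf_eq
  linarith
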